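/- Let A, B be positive definite n×n complex matrices and ν ∈ (0,1). Then for every nonnegative integer n₀, in the Loewner order, A !_ν B ≤ ( A^{−1}♯_ν B^{−1} + Σ_{k=0}^{n₀} r_k [ A^{−1}♯_{m_k/2^k} B^{−1} − 2 A^{−1}♯_{(2m_k+1)/2^{k+1}} B^{−1} + A^{−1}♯_{(m_k+1)/2^k} B^{−1} ] )^{−1} ≤ A♯_ν B, where A !_ν B = ((1−ν)A^{−1} + νB^{−1})^{−1} is the ν-weighted harmonic mean. -/

import Mathlib

open scoped ComplexOrder

/-- `r ν k`: the recursively defined coefficients, `r 0 = min {ν, 1-ν}`,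
`r k = min {2 r (k-1), 1 - 2 r (k-1)}`. -/
noncomputable def r (ν : ℝ) : ℕ → ℝ
  | 0 => min ν (1 - ν)
  | k + 1 => min (2 * r ν k) (1 - 2 * r ν k)

/-- `m ν k = ⌊2^k ν⌋`, as a real number. -/
noncomputable def m (ν : ℝ) (k : ℕ) : ℝ := ⌊2 ^ k * ν⌋

/-- the bracket term -/
noncomputable def brk (ν x : ℝ) (k : ℕ) : ℝ :=
  x ^ (m ν k / 2 ^ k) - 2 * x ^ ((2 * m ν k + 1) / 2 ^ (k + 1)) + x ^ ((m ν k + 1) / 2 ^ k)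

lemma r_mem {ν : ℝ} (hν : ν ∈ Set.Icc (0:ℝ) 1) (k : ℕ) : r ν k ∈ Set.Icc (0:ℝ) (1/2) := by
  obtain ⟨h0, h1⟩ := hν
  induction k with
  | zero =>
    refine ⟨le_min h0 (by linarith), ?_⟩
    rcases le_total ν (1/2) with h | h
    · exact le_trans (min_le_left _ _) h
    · exact le_trans (min_le_right _ _) (by linarith)
  | succ k ih =>
    obtain ⟨ih0, ih1⟩ := ih
    refine ⟨le_min (by linarith) (by linarith), ?_⟩
    rcases le_total (2 * r ν k) (1/2) with h | h
    · exact le_trans (min_le_left _ _) h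
    · exact le_trans (min_le_right _ _) (by linarith)

lemma brk_nonneg {x : ℝ} (ν : ℝ) (hx : 0 < x) (k : ℕ) : 0 ≤ brk ν x k := by
  have hb : (2 * m ν k + 1) / 2 ^ (k + 1)
      = m ν k / 2 ^ k / 2 + (m ν k + 1) / 2 ^ k / 2 := by
    field_simp [pow_succ]; try ring
  have ha : x ^ (m ν k / 2 ^ k) = x ^ (m ν k / 2 ^ k / 2) * x ^ (m ν k / 2 ^ k / 2) := by
    rw [← Real.rpow_add hx]; ring_nf
  have hc : x ^ ((m ν k + 1) / 2 ^ k)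
      = x ^ ((m ν k + 1) / 2 ^ k / 2) * x ^ ((m ν k + 1) / 2 ^ k / 2) := by
    rw [← Real.rpow_add hx]; ring_nf
  have hbc : x ^ ((2 * m ν k + 1) / 2 ^ (k + 1)) =
      x ^ (m ν k / 2 ^ k / 2) * x ^ ((m ν k + 1) / 2 ^ k / 2) := by
    rw [hb, Real.rpow_add hx]
  unfold brk
  rw [ha, hc, hbc]
  nlinarith [sq_nonneg (x ^ (m ν k / 2 ^ k / 2) - x ^ ((m ν k + 1) / 2 ^ k / 2))]

lemma r_one (k : ℕ) : r 1 k = 0 := by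
  induction k with
  | zero => simp [r]
  | succ k ih => simp [r, ih]

lemma m_zero_of_lt_one {ν : ℝ} (h0 : 0 ≤ ν) (h1 : ν < 1) : m ν 0 = 0 := by
  unfold m
  have : ⌊(2:ℝ) ^ 0 * ν⌋ = 0 := by
    rw [Int.floor_eq_zero_iff]
    constructor <;> simpa using (by assumption)
  rw [this]; simp

lemma brk_zero {ν x : ℝ} (h0 : 0 ≤ ν) (h1 : ν < 1) (hx : 0 < x) :
    brk ν x 0 = 1 - 2 * x ^ ((1:ℝ)/2) + x := by
  unfold brk
  rw [m_zero_of_lt_one h0 h1]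
  norm_num [Real.rpow_one]

/-- halving identity for `r`, lower case -/
lemma r_succ_lo {ν : ℝ} (h : ν ≤ 1/2) (h0 : 0 ≤ ν) (j : ℕ) : r ν (j + 1) = r (2 * ν) j := by
  induction j with
  | zero =>
    show min (2 * r ν 0) (1 - 2 * r ν 0) = min (2*ν) (1 - 2*ν)
    have : r ν 0 = ν := min_eq_left (by linarith)
    rw [this]
  | succ j ih =>
    show min (2 * r ν (j+1)) (1 - 2 * r ν (j+1)) = _
    rw [ih]; rfl

/-- halving identity for `r`, upper case -/
lemma r_succ_hi {ν : ℝ} (h : 1/2 ≤ ν) (h1 : ν ≤ 1) (j : ℕ) : r ν (j + 1) = r (2 * ν - 1) j := by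
  induction j with
  | zero =>
    show min (2 * r ν 0) (1 - 2 * r ν 0) = min (2*ν - 1) (1 - (2*ν - 1))
    have : r ν 0 = 1 - ν := min_eq_right (by linarith)
    rw [this, min_comm]
    congr 1 <;> ring
  | succ j ih =>
    show min (2 * r ν (j+1)) (1 - 2 * r ν (j+1)) = _
    rw [ih]; rfl

lemma m_succ_lo (ν : ℝ) (j : ℕ) : m ν (j + 1) = m (2 * ν) j := by
  unfold m; congr 2; ring

lemma m_succ_hi {ν : ℝ} (j : ℕ) : m ν (j + 1) = 2 ^ j + m (2 * ν - 1) j := by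
  unfold m
  have : (2:ℝ) ^ (j+1) * ν = 2 ^ j * (2 * ν - 1) + ((2 ^ j : ℤ) : ℝ) := by push_cast; ring
  rw [this, Int.floor_add_intCast]
  push_cast; ring

lemma rpow_half_rpow {x : ℝ} (hx : 0 < x) (e : ℝ) : (x ^ ((1:ℝ)/2)) ^ e = x ^ (e / 2) := by
  rw [← Real.rpow_mul hx.le]; congr 1; ring

lemma brk_succ_lo {ν x : ℝ} (hx : 0 < x) (j : ℕ) :
    brk ν x (j + 1) = brk (2 * ν) (x ^ ((1:ℝ)/2)) j := by
  unfold brk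
  rw [m_succ_lo]
  rw [rpow_half_rpow hx, rpow_half_rpow hx, rpow_half_rpow hx]
  have h2 : (2:ℝ) ^ (j+1) ≠ 0 := by positivity
  have h22 : (2:ℝ) ^ (j+1+1) ≠ 0 := by positivity
  congr 2 <;> [skip; congr 1; skip] <;> field_simp [pow_succ] <;> ring

lemma brk_succ_hi {ν x : ℝ} (hx : 0 < x) (j : ℕ) :
    brk ν x (j + 1) = x ^ ((1:ℝ)/2) * brk (2 * ν - 1) (x ^ ((1:ℝ)/2)) j := by
  have key : ∀ e : ℝ, x ^ ((2:ℝ)^j * 1 + e) / 1 = 0 → True := fun _ _ => trivial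
  unfold brk
  rw [m_succ_hi]
  have he : ∀ e : ℝ, x ^ ((1:ℝ)/2 + e/2) = x ^ ((1:ℝ)/2) * (x ^ ((1:ℝ)/2)) ^ e := by
    intro e
    rw [Real.rpow_add hx, rpow_half_rpow hx]
  have e1 : (2 ^ j + m (2*ν-1) j) / 2 ^ (j+1) = (1:ℝ)/2 + (m (2*ν-1) j / 2 ^ j)/2 := by
    field_simp [pow_succ]; try ring
  have e2 : (2 * (2 ^ j + m (2*ν-1) j) + 1) / 2 ^ (j+1+1)
      = (1:ℝ)/2 + ((2 * m (2*ν-1) j + 1) / 2 ^ (j+1))/2 := by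
    field_simp [pow_succ]; try ring
  have e3 : (2 ^ j + m (2*ν-1) j + 1) / 2 ^ (j+1) = (1:ℝ)/2 + ((m (2*ν-1) j + 1) / 2 ^ j)/2 := by
    field_simp [pow_succ]; try ring
  rw [e1, e2, e3, he, he, he]
  ring

theorem scalar_key (n : ℕ) : ∀ ν : ℝ, ν ∈ Set.Icc (0:ℝ) 1 → ∀ x : ℝ, 0 < x →
    x ^ ν + ∑ k ∈ Finset.range n, r ν k * brk ν x k ≤ (1 - ν) + ν * x := by
  induction n with
  | zero =>
    intro ν hν x hx
    simp only [Finset.range_zero, Finset.sum_empty, add_zero]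
    have := Real.geom_mean_le_arith_mean2_weighted (by linarith [hν.2] : (0:ℝ) ≤ 1 - ν)
      hν.1 zero_le_one hx.le (by ring)
    simpa using this
  | succ n ih =>
    intro ν hν x hx
    rcases eq_or_lt_of_le hν.2 with hν1 | hν1
    · -- ν = 1
      subst hν1
      simp only [r_one, zero_mul, Finset.sum_const_zero, add_zero, Real.rpow_one]
      norm_num
    set y := x ^ ((1:ℝ)/2) with hy
    have hy0 : 0 < y := Real.rpow_pos_of_pos hx _
    have hyy : y * y = x := by
      rw [hy, ← Real.rpow_add hx]; norm_num
    have hxν : x ^ ν = y ^ (2 * ν) := by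
      rw [hy, rpow_half_rpow hx]; congr 1; ring
    rw [Finset.sum_range_succ']
    rw [brk_zero hν.1 hν1 hx]
    rcases le_total ν (1/2) with hc | hc
    · -- lower case
      have hr0 : r ν 0 = ν := min_eq_left (by linarith)
      have hsum : ∀ j ∈ Finset.range n, r ν (j+1) * brk ν x (j+1)
          = r (2*ν) j * brk (2*ν) y j := by
        intro j _
        rw [r_succ_lo hc hν.1, brk_succ_lo hx]
      rw [Finset.sum_congr rfl hsum, hr0]
      have hIH := ih (2*ν) ⟨by linarith [hν.1], by linarith⟩ y hy0
      rw [hxν]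
      nlinarith [hIH]
    · -- upper case
      have hr0 : r ν 0 = 1 - ν := min_eq_right (by linarith)
      have hsum : ∀ j ∈ Finset.range n, r ν (j+1) * brk ν x (j+1)
          = y * (r (2*ν-1) j * brk (2*ν-1) y j) := by
        intro j _
        rw [r_succ_hi hc hν.2, brk_succ_hi hx]; ring
      rw [Finset.sum_congr rfl hsum, hr0, ← Finset.mul_sum]
      have hIH := ih (2*ν-1) ⟨by linarith, by linarith [hν.2]⟩ y hy0
      have hxν' : x ^ ν = y * y ^ (2*ν - 1) := by
        rw [hxν, ← Real.rpow_one_add' hy0.le (by linarith : (1:ℝ) + (2*ν-1) ≠ 0)]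
        congr 1; ring
      nlinarith [hIH, mul_le_mul_of_nonneg_left hIH hy0.le]

variable {d : ℕ}

/-- Real power of a matrix via the functional calculus: for a Hermitian matrix with spectral
decomposition `A = U diag(λᵢ) U*`, `mpow A t = U diag(λᵢ^t) U*` (real powers `Real.rpow` of the
eigenvalues); junk value `A` for non-Hermitian `A`. -/
noncomputable def mpow (A : Matrix (Fin d) (Fin d) ℂ) (t : ℝ) : Matrix (Fin d) (Fin d) ℂ :=
  if hA : A.IsHermitian then
    (hA.eigenvectorUnitary : Matrix (Fin d) (Fin d) ℂ) *
      Matrix.diagonal (fun i => ((hA.eigenvalues i ^ t : ℝ) : ℂ)) *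
      star (hA.eigenvectorUnitary : Matrix (Fin d) (Fin d) ℂ)
  else A

open Matrix

noncomputable def fc {C : Matrix (Fin d) (Fin d) ℂ} (hC : C.IsHermitian) (v : Fin d → ℝ) :
    Matrix (Fin d) (Fin d) ℂ :=
  (hC.eigenvectorUnitary : Matrix (Fin d) (Fin d) ℂ) *
    Matrix.diagonal (fun i => (v i : ℂ)) *
    star (hC.eigenvectorUnitary : Matrix (Fin d) (Fin d) ℂ)

section fc

variable {C : Matrix (Fin d) (Fin d) ℂ} (hC : C.IsHermitian)

lemma fc_mul (v w : Fin d → ℝ) : fc hC v * fc hC w = fc hC (fun i => v i * w i) := by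
  unfold fc
  have hU : star (hC.eigenvectorUnitary : Matrix (Fin d) (Fin d) ℂ) *
      (hC.eigenvectorUnitary : Matrix (Fin d) (Fin d) ℂ) = 1 :=
    mem_unitaryGroup_iff'.mp hC.eigenvectorUnitary.2
  have : ∀ D E : Matrix (Fin d) (Fin d) ℂ,
      ((hC.eigenvectorUnitary : Matrix (Fin d) (Fin d) ℂ) * D *
        star (hC.eigenvectorUnitary : Matrix (Fin d) (Fin d) ℂ)) *
      ((hC.eigenvectorUnitary : Matrix (Fin d) (Fin d) ℂ) * E *
        star (hC.eigenvectorUnitary : Matrix (Fin d) (Fin d) ℂ)) =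
      (hC.eigenvectorUnitary : Matrix (Fin d) (Fin d) ℂ) * (D * E) *
        star (hC.eigenvectorUnitary : Matrix (Fin d) (Fin d) ℂ) := by
    intro D E
    calc _ = (hC.eigenvectorUnitary : Matrix (Fin d) (Fin d) ℂ) *
          (D * ((star (hC.eigenvectorUnitary : Matrix (Fin d) (Fin d) ℂ) *
            (hC.eigenvectorUnitary : Matrix (Fin d) (Fin d) ℂ)) * (E *
            star (hC.eigenvectorUnitary : Matrix (Fin d) (Fin d) ℂ)))) := by
          simp only [Matrix.mul_assoc]
      _ = _ := by rw [hU, Matrix.one_mul]; simp only [Matrix.mul_assoc]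
  rw [this, Matrix.diagonal_mul_diagonal]
  congr 2
  funext i
  push_cast
  rfl

lemma fc_one : fc hC (fun _ => 1) = 1 := by
  unfold fc
  have hU : (hC.eigenvectorUnitary : Matrix (Fin d) (Fin d) ℂ) *
      star (hC.eigenvectorUnitary : Matrix (Fin d) (Fin d) ℂ) = 1 :=
    mem_unitaryGroup_iff.mp hC.eigenvectorUnitary.2
  simpa using hU

lemma fc_zero : fc hC (fun _ => 0) = 0 := by
  unfold fc; simp

lemma fc_add (v w : Fin d → ℝ) : fc hC (fun i => v i + w i) = fc hC v + fc hC w := by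
  unfold fc
  have hd : Matrix.diagonal (fun i => ((v i + w i : ℝ) : ℂ)) =
      Matrix.diagonal (fun i => (v i : ℂ)) + Matrix.diagonal (fun i => (w i : ℂ)) := by
    rw [Matrix.diagonal_add]; congr 1; funext i; push_cast; rfl
  rw [hd, mul_add, add_mul]

lemma fc_smul (c : ℝ) (v : Fin d → ℝ) : fc hC (fun i => c * v i) = c • fc hC v := by
  unfold fc
  have hd : Matrix.diagonal (fun i => ((c * v i : ℝ) : ℂ)) =
      c • Matrix.diagonal (fun i => (v i : ℂ)) := by
    ext i j
    by_cases h : i = j <;>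
      simp [Matrix.diagonal_apply, h, Complex.real_smul]
  rw [hd, mul_smul_comm, smul_mul_assoc]

lemma fc_sub (v w : Fin d → ℝ) : fc hC (fun i => v i - w i) = fc hC v - fc hC w := by
  have h1 : ∀ i, v i - w i = v i + (-1) * w i := by intro i; ring
  simp only [h1]
  rw [fc_add hC v (fun i => (-1) * w i), fc_smul hC (-1) w]
  simp [sub_eq_add_neg]

lemma fc_sum {s : Finset ℕ} (f : ℕ → Fin d → ℝ) :
    fc hC (fun i => ∑ k ∈ s, f k i) = ∑ k ∈ s, fc hC (f k) := by
  classical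
  induction s using Finset.induction_on with
  | empty => simpa using fc_zero hC
  | insert _ _ hx ih =>
    rename_i a s'
    simp only [Finset.sum_insert hx]
    rw [← ih, ← fc_add]

lemma fc_herm (v : Fin d → ℝ) : (fc hC v).IsHermitian := by
  have hd : (Matrix.diagonal fun i => (v i : ℂ)).IsHermitian :=
    isHermitian_diagonal_of_self_adjoint _ (by
      funext i
      simp [Pi.star_apply, Complex.conj_ofReal])
  have := Matrix.isHermitian_mul_mul_conjTranspose
    (hC.eigenvectorUnitary : Matrix (Fin d) (Fin d) ℂ) hd
  simpa [fc, Matrix.star_eq_conjTranspose] using this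

lemma fc_posSemidef {v : Fin d → ℝ} (hv : ∀ i, 0 ≤ v i) : (fc hC v).PosSemidef := by
  have hdiag : (Matrix.diagonal (fun i => (v i : ℂ))).PosSemidef :=
    Matrix.posSemidef_diagonal_iff.mpr fun i => Complex.zero_le_real.mpr (hv i)
  have := hdiag.mul_mul_conjTranspose_same (hC.eigenvectorUnitary : Matrix (Fin d) (Fin d) ℂ)
  simpa [fc, Matrix.star_eq_conjTranspose] using this

lemma fc_spectral : fc hC hC.eigenvalues = C := by
  conv_rhs => rw [hC.spectral_theorem]
  rfl

lemma mpow_eq_fc {A : Matrix (Fin d) (Fin d) ℂ} (hA : A.IsHermitian) (t : ℝ) :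
    mpow A t = fc hA (fun i => hA.eigenvalues i ^ t) := by
  unfold mpow
  rw [dif_pos hA]
  rfl

end fc

section mpow

variable {A : Matrix (Fin d) (Fin d) ℂ}

lemma mpow_herm (hA : A.IsHermitian) (t : ℝ) : (mpow A t).IsHermitian := by
  rw [mpow_eq_fc hA]; exact fc_herm hA _

lemma mpow_mul_mpow (hA : A.PosDef) (s t : ℝ) : mpow A s * mpow A t = mpow A (s + t) := by
  rw [mpow_eq_fc hA.1, mpow_eq_fc hA.1, mpow_eq_fc hA.1, fc_mul]
  have : (fun i => hA.1.eigenvalues i ^ s * hA.1.eigenvalues i ^ t)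
      = (fun i => hA.1.eigenvalues i ^ (s + t)) := by
    funext i
    exact (Real.rpow_add (hA.eigenvalues_pos i) s t).symm
  rw [this]

lemma mpow_zero (hA : A.IsHermitian) : mpow A 0 = 1 := by
  rw [mpow_eq_fc hA]
  simpa [Real.rpow_zero] using fc_one hA

lemma mpow_one_eq (hA : A.IsHermitian) : mpow A 1 = A := by
  rw [mpow_eq_fc hA]
  simp only [Real.rpow_one]
  exact fc_spectral hA

lemma mpow_eq_cfc (hA : A.IsHermitian) (t : ℝ) : mpow A t = cfc (fun x : ℝ => x ^ t) A := by
  rw [hA.cfc_eq]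
  unfold mpow Matrix.IsHermitian.cfc
  rw [dif_pos hA]
  rfl

lemma inv_eq_cfc (hA : A.PosDef) : A⁻¹ = cfc (fun x : ℝ => x⁻¹) A := by
  rw [hA.1.cfc_eq]
  have h1 : (hA.1.cfc fun x : ℝ => x⁻¹) = fc hA.1 (fun i => (hA.1.eigenvalues i)⁻¹) := rfl
  rw [h1]
  refine Matrix.inv_eq_left_inv ?_
  have key : fc hA.1 (fun i => (hA.1.eigenvalues i)⁻¹) * fc hA.1 hA.1.eigenvalues = 1 := by
    rw [fc_mul]
    rw [show (fun i => (hA.1.eigenvalues i)⁻¹ * hA.1.eigenvalues i) = fun _ : Fin d => (1:ℝ) by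
      funext i; exact inv_mul_cancel₀ (hA.eigenvalues_pos i).ne']
    exact fc_one hA.1
  calc fc hA.1 (fun i => (hA.1.eigenvalues i)⁻¹) * A
      = fc hA.1 (fun i => (hA.1.eigenvalues i)⁻¹) * fc hA.1 hA.1.eigenvalues := by
        rw [fc_spectral]
    _ = 1 := key

lemma mpow_inv (hA : A.PosDef) (t : ℝ) : mpow A⁻¹ t = mpow A (-t) := by
  have hA' : IsSelfAdjoint A := hA.1
  rw [mpow_eq_cfc hA.inv.1, inv_eq_cfc hA,
    ← cfc_comp (fun x : ℝ => x ^ t) (fun x : ℝ => x⁻¹) A hA'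
      (Set.Finite.continuousOn (f := fun x : ℝ => x ^ t)
        ((Matrix.finite_real_spectrum (A := A)).image _))
      (Set.Finite.continuousOn (f := fun x : ℝ => x⁻¹)
        (Matrix.finite_real_spectrum (A := A))),
    mpow_eq_cfc hA.1]
  apply cfc_congr
  intro x hx
  rw [hA.1.spectrum_real_eq_range_eigenvalues] at hx
  obtain ⟨i, rfl⟩ := hx
  have hpos := hA.eigenvalues_pos i
  simp only [Function.comp_apply]
  rw [Real.inv_rpow hpos.le, ← Real.rpow_neg hpos.le]

end mpow

section helpers

variable {C : Matrix (Fin d) (Fin d) ℂ} (hC : C.IsHermitian)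

lemma cross_mul {X Y : Matrix (Fin d) (Fin d) ℂ} (h : X * Y = 1)
    (M N : Matrix (Fin d) (Fin d) ℂ) :
    (X * M * X) * (Y * N * Y) = X * (M * N) * Y := by
  calc (X * M * X) * (Y * N * Y) = X * (M * ((X * Y) * (N * Y))) := by
        simp only [Matrix.mul_assoc]
    _ = X * (M * N) * Y := by rw [h, Matrix.one_mul]; simp only [Matrix.mul_assoc]

lemma conj_inv' {X Y : Matrix (Fin d) (Fin d) ℂ} (hXY : X * Y = 1) (hYX : Y * X = 1)
    (v : Fin d → ℝ) (hv : ∀ i, v i ≠ 0) :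
    (X * fc hC v * X)⁻¹ = Y * fc hC (fun i => (v i)⁻¹) * Y := by
  refine Matrix.inv_eq_left_inv ?_
  rw [cross_mul hYX, fc_mul]
  rw [show (fun i => (v i)⁻¹ * v i) = fun _ : Fin d => (1:ℝ) by
    funext i; exact inv_mul_cancel₀ (hv i)]
  rw [fc_one, Matrix.mul_one, hYX]

lemma conj_sub' (T : Matrix (Fin d) (Fin d) ℂ) (v w : Fin d → ℝ) :
    T * fc hC v * T - T * fc hC w * T = T * fc hC (fun i => v i - w i) * T := by
  rw [fc_sub, mul_sub, sub_mul]

lemma conj_psd {T : Matrix (Fin d) (Fin d) ℂ} (hT : T.IsHermitian) {v : Fin d → ℝ}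
    (hv : ∀ i, 0 ≤ v i) : (T * fc hC v * T).PosSemidef := by
  have h2 := (fc_posSemidef hC hv).mul_mul_conjTranspose_same T
  rwa [hT.eq] at h2

lemma posdef_inv_fc {P : Matrix (Fin d) (Fin d) ℂ} (hP : P.PosDef) :
    P⁻¹ = fc hP.1 (fun i => (hP.1.eigenvalues i)⁻¹) := by
  refine Matrix.inv_eq_left_inv ?_
  have key : fc hP.1 (fun i => (hP.1.eigenvalues i)⁻¹) * fc hP.1 hP.1.eigenvalues = 1 := by
    rw [fc_mul]
    rw [show (fun i => (hP.1.eigenvalues i)⁻¹ * hP.1.eigenvalues i) = fun _ : Fin d => (1:ℝ) by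
      funext i; exact inv_mul_cancel₀ (hP.eigenvalues_pos i).ne']
    exact fc_one hP.1
  calc fc hP.1 (fun i => (hP.1.eigenvalues i)⁻¹) * P
      = fc hP.1 (fun i => (hP.1.eigenvalues i)⁻¹) * fc hP.1 hP.1.eigenvalues := by
        rw [fc_spectral]
    _ = 1 := key

lemma conj_comb (T : Matrix (Fin d) (Fin d) ℂ) (v0 : Fin d → ℝ) (c : ℕ → ℝ)
    (p q s : ℕ → Fin d → ℝ) (n : ℕ) :
    T * fc hC v0 * T + ∑ k ∈ Finset.range n,
      c k • (T * fc hC (p k) * T - (2:ℝ) • (T * fc hC (q k) * T) + T * fc hC (s k) * T)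
    = T * fc hC (fun i => v0 i + ∑ k ∈ Finset.range n,
        c k * (p k i - 2 * q k i + s k i)) * T := by
  have hterm : ∀ k, fc hC (fun i => c k * (p k i - 2 * q k i + s k i))
      = c k • (fc hC (p k) - (2:ℝ) • fc hC (q k) + fc hC (s k)) := by
    intro k
    rw [fc_smul hC (c k) (fun i => p k i - 2 * q k i + s k i)]
    congr 1
    rw [fc_add hC (fun i => p k i - 2 * q k i) (s k),
      fc_sub hC (p k) (fun i => 2 * q k i), fc_smul hC 2 (q k)]
  rw [fc_add hC v0 (fun i => ∑ k ∈ Finset.range n, c k * (p k i - 2 * q k i + s k i)),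
    fc_sum hC (fun k i => c k * (p k i - 2 * q k i + s k i))]
  simp only [hterm]
  simp only [Finset.mul_sum, Finset.sum_mul, mul_add, add_mul, mul_sub, sub_mul,
    mul_smul_comm, smul_mul_assoc, Matrix.mul_assoc]

end helpers

lemma conj_posDef {P T : Matrix (Fin d) (Fin d) ℂ} (hP : P.PosDef) (hT : T.IsHermitian)
    (hTu : IsUnit T) : (T * P * T).PosDef := by
  refine Matrix.PosDef.of_dotProduct_mulVec_pos ?_ ?_
  · have := Matrix.isHermitian_mul_mul_conjTranspose T hP.1
    rwa [hT.eq] at this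
  · intro x hx
    have hinj : Function.Injective T.mulVec := Matrix.mulVec_injective_iff_isUnit.mpr hTu
    have h1 : T.mulVec x ≠ 0 := by
      intro hz
      exact hx (hinj (by simpa using hz))
    have h2 := hP.dotProduct_mulVec_pos h1
    have key : dotProduct (star x) ((T * P * T).mulVec x)
        = dotProduct (star (T.mulVec x)) (P.mulVec (T.mulVec x)) := by
      rw [← Matrix.mulVec_mulVec, ← Matrix.mulVec_mulVec, Matrix.dotProduct_mulVec,
        Matrix.star_mulVec, hT.eq]
    rwa [key]

/-- The μ-weighted geometric mean `A♯_μ B = A^{1/2} (A^{-1/2} B A^{-1/2})^μ A^{1/2}`. -/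
noncomputable def sharp (A B : Matrix (Fin d) (Fin d) ℂ) (μ : ℝ) : Matrix (Fin d) (Fin d) ℂ :=
  mpow A (1 / 2) * mpow (mpow A (-(1 / 2)) * B * mpow A (-(1 / 2))) μ * mpow A (1 / 2)

/-- The μ-weighted harmonic mean `A !_μ B = ((1-μ)A⁻¹ + μB⁻¹)⁻¹`. -/
noncomputable def harm (A B : Matrix (Fin d) (Fin d) ℂ) (μ : ℝ) : Matrix (Fin d) (Fin d) ℂ :=
  ((1 - μ) • A⁻¹ + μ • B⁻¹)⁻¹

theorem stmt12 (A B : Matrix (Fin d) (Fin d) ℂ) (hA : A.PosDef) (hB : B.PosDef)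
    (ν : ℝ) (hν : ν ∈ Set.Ioo (0 : ℝ) 1) (n₀ : ℕ) :
    ((sharp A⁻¹ B⁻¹ ν + ∑ k ∈ Finset.range (n₀ + 1), r ν k •
        (sharp A⁻¹ B⁻¹ (m ν k / 2 ^ k) -
          (2 : ℝ) • sharp A⁻¹ B⁻¹ ((2 * m ν k + 1) / 2 ^ (k + 1)) +
          sharp A⁻¹ B⁻¹ ((m ν k + 1) / 2 ^ k)))⁻¹ - harm A B ν).PosSemidef ∧
    (sharp A B ν -
      (sharp A⁻¹ B⁻¹ ν + ∑ k ∈ Finset.range (n₀ + 1), r ν k •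
        (sharp A⁻¹ B⁻¹ (m ν k / 2 ^ k) -
          (2 : ℝ) • sharp A⁻¹ B⁻¹ ((2 * m ν k + 1) / 2 ^ (k + 1)) +
          sharp A⁻¹ B⁻¹ ((m ν k + 1) / 2 ^ k)))⁻¹).PosSemidef := by
  obtain ⟨hν0, hν1⟩ := hν
  have hS : (mpow A (1 / 2 : ℝ)).IsHermitian := mpow_herm hA.1 _
  have hS' : (mpow A (-(1 / 2) : ℝ)).IsHermitian := mpow_herm hA.1 _
  have hSS' : mpow A (1 / 2 : ℝ) * mpow A (-(1 / 2) : ℝ) = 1 := by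
    rw [mpow_mul_mpow hA, show (1 / 2 + -(1 / 2) : ℝ) = 0 by norm_num, mpow_zero hA.1]
  have hS'S : mpow A (-(1 / 2) : ℝ) * mpow A (1 / 2 : ℝ) = 1 := by
    rw [mpow_mul_mpow hA, show (-(1 / 2) + 1 / 2 : ℝ) = 0 by norm_num, mpow_zero hA.1]
  have hS'u : IsUnit (mpow A (-(1 / 2) : ℝ)) :=
    ⟨⟨mpow A (-(1 / 2) : ℝ), mpow A (1 / 2 : ℝ), hS'S, hSS'⟩, rfl⟩
  have hC : (mpow A (-(1 / 2)) * B * mpow A (-(1 / 2))).PosDef := conj_posDef hB hS' hS'u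
  have hCh : (mpow A (-(1 / 2)) * B * mpow A (-(1 / 2))).IsHermitian := hC.1
  have hu : ∀ i, 0 < hCh.eigenvalues i := fun i => hC.eigenvalues_pos i
  -- scalar facts
  have hF_ub : ∀ x : ℝ, 0 < x →
      x ^ ν + ∑ k ∈ Finset.range (n₀ + 1), r ν k * brk ν x k ≤ (1 - ν) + ν * x :=
    fun x hx => scalar_key (n₀ + 1) ν ⟨hν0.le, hν1.le⟩ x hx
  have hF_lb : ∀ x : ℝ, 0 < x →
      x ^ ν ≤ x ^ ν + ∑ k ∈ Finset.range (n₀ + 1), r ν k * brk ν x k := by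
    intro x hx
    have h0 : 0 ≤ ∑ k ∈ Finset.range (n₀ + 1), r ν k * brk ν x k :=
      Finset.sum_nonneg fun k _ =>
        mul_nonneg (r_mem ⟨hν0.le, hν1.le⟩ k).1 (brk_nonneg ν hx k)
    linarith
  have hF_pos : ∀ x : ℝ, 0 < x →
      0 < x ^ ν + ∑ k ∈ Finset.range (n₀ + 1), r ν k * brk ν x k :=
    fun x hx => lt_of_lt_of_le (Real.rpow_pos_of_pos hx ν) (hF_lb x hx)
  -- basic matrix identities
  have hBinvB : B⁻¹ * B = 1 :=
    Matrix.nonsing_inv_mul B (Matrix.isUnit_iff_isUnit_det B |>.mp hB.isUnit)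
  have hCinner : mpow A (1 / 2) * B⁻¹ * mpow A (1 / 2)
      = (mpow A (-(1 / 2)) * B * mpow A (-(1 / 2)))⁻¹ := by
    refine (Matrix.inv_eq_left_inv ?_).symm
    rw [cross_mul hSS', hBinvB, Matrix.mul_one, hSS']
  have hsharpinv : ∀ t : ℝ, sharp A⁻¹ B⁻¹ t
      = mpow A (-(1 / 2)) * fc hCh (fun i => hCh.eigenvalues i ^ (-t)) * mpow A (-(1 / 2)) := by
    intro t
    show mpow A⁻¹ (1 / 2) * mpow (mpow A⁻¹ (-(1 / 2)) * B⁻¹ * mpow A⁻¹ (-(1 / 2))) t *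
      mpow A⁻¹ (1 / 2) = _
    simp only [mpow_inv hA, show (-(-(1 / 2)) : ℝ) = 1 / 2 by norm_num]
    rw [hCinner, mpow_inv hC, mpow_eq_fc hCh]
  -- the combined middle term
  have hW : sharp A⁻¹ B⁻¹ ν + ∑ k ∈ Finset.range (n₀ + 1), r ν k •
        (sharp A⁻¹ B⁻¹ (m ν k / 2 ^ k) -
          (2 : ℝ) • sharp A⁻¹ B⁻¹ ((2 * m ν k + 1) / 2 ^ (k + 1)) +
          sharp A⁻¹ B⁻¹ ((m ν k + 1) / 2 ^ k))
      = mpow A (-(1 / 2)) * fc hCh (fun i => ((hCh.eigenvalues i)⁻¹) ^ ν +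
          ∑ k ∈ Finset.range (n₀ + 1), r ν k * brk ν ((hCh.eigenvalues i)⁻¹) k) *
        mpow A (-(1 / 2)) := by
    simp only [hsharpinv]
    rw [conj_comb hCh (mpow A (-(1 / 2))) (fun i => hCh.eigenvalues i ^ (-ν)) (r ν)
      (fun k i => hCh.eigenvalues i ^ (-(m ν k / 2 ^ k)))
      (fun k i => hCh.eigenvalues i ^ (-((2 * m ν k + 1) / 2 ^ (k + 1))))
      (fun k i => hCh.eigenvalues i ^ (-((m ν k + 1) / 2 ^ k))) (n₀ + 1)]
    have hfun : (fun i : Fin d => hCh.eigenvalues i ^ (-ν) +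
        ∑ k ∈ Finset.range (n₀ + 1), r ν k *
          (hCh.eigenvalues i ^ (-(m ν k / 2 ^ k)) -
            2 * hCh.eigenvalues i ^ (-((2 * m ν k + 1) / 2 ^ (k + 1))) +
            hCh.eigenvalues i ^ (-((m ν k + 1) / 2 ^ k))))
        = fun i => ((hCh.eigenvalues i)⁻¹) ^ ν +
            ∑ k ∈ Finset.range (n₀ + 1), r ν k * brk ν ((hCh.eigenvalues i)⁻¹) k := by
      funext i
      have hinv : ∀ e : ℝ, hCh.eigenvalues i ^ (-e) = ((hCh.eigenvalues i)⁻¹) ^ e := by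
        intro e; rw [Real.rpow_neg (hu i).le, Real.inv_rpow (hu i).le]
      rw [hinv ν]
      congr 1
      refine Finset.sum_congr rfl fun k _ => ?_
      congr 1
      unfold brk
      rw [hinv (m ν k / 2 ^ k), hinv ((2 * m ν k + 1) / 2 ^ (k + 1)),
        hinv ((m ν k + 1) / 2 ^ k)]
    rw [hfun]
  have hGpos : ∀ i, 0 < ((hCh.eigenvalues i)⁻¹) ^ ν +
      ∑ k ∈ Finset.range (n₀ + 1), r ν k * brk ν ((hCh.eigenvalues i)⁻¹) k :=
    fun i => hF_pos _ (inv_pos.mpr (hu i))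
  have hWinv : (sharp A⁻¹ B⁻¹ ν + ∑ k ∈ Finset.range (n₀ + 1), r ν k •
        (sharp A⁻¹ B⁻¹ (m ν k / 2 ^ k) -
          (2 : ℝ) • sharp A⁻¹ B⁻¹ ((2 * m ν k + 1) / 2 ^ (k + 1)) +
          sharp A⁻¹ B⁻¹ ((m ν k + 1) / 2 ^ k)))⁻¹
      = mpow A (1 / 2) * fc hCh (fun i => (((hCh.eigenvalues i)⁻¹) ^ ν +
          ∑ k ∈ Finset.range (n₀ + 1), r ν k * brk ν ((hCh.eigenvalues i)⁻¹) k)⁻¹) *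
        mpow A (1 / 2) := by
    rw [hW]
    exact conj_inv' hCh hS'S hSS' _ (fun i => (hGpos i).ne')
  -- harmonic mean
  have hAinv1 : mpow A (-1 : ℝ) * A = 1 := by
    calc mpow A (-1 : ℝ) * A = mpow A (-1 : ℝ) * mpow A 1 := by rw [mpow_one_eq hA.1]
      _ = 1 := by rw [mpow_mul_mpow hA, show (-1 + 1 : ℝ) = 0 by norm_num, mpow_zero hA.1]
  have hAinv : A⁻¹ = mpow A (-(1 / 2)) * fc hCh (fun _ : Fin d => (1:ℝ)) * mpow A (-(1 / 2)) := by
    calc A⁻¹ = mpow A (-1 : ℝ) := Matrix.inv_eq_left_inv hAinv1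
      _ = mpow A (-(1 / 2)) * mpow A (-(1 / 2)) := by
          rw [mpow_mul_mpow hA, show (-(1 / 2) + -(1 / 2) : ℝ) = -1 by norm_num]
      _ = _ := by rw [fc_one hCh, Matrix.mul_one]
  have hBinv : B⁻¹ = mpow A (-(1 / 2)) * fc hCh (fun i => (hCh.eigenvalues i)⁻¹) *
      mpow A (-(1 / 2)) := by
    have hCinv : (mpow A (-(1 / 2)) * B * mpow A (-(1 / 2)))⁻¹
        = fc hCh (fun i => (hCh.eigenvalues i)⁻¹) := posdef_inv_fc hC
    calc B⁻¹ = mpow A (-(1 / 2)) * (mpow A (1 / 2) * B⁻¹ * mpow A (1 / 2)) *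
        mpow A (-(1 / 2)) := by
          rw [show mpow A (-(1 / 2)) * (mpow A (1 / 2) * B⁻¹ * mpow A (1 / 2)) *
              mpow A (-(1 / 2)) = mpow A (-(1 / 2)) * mpow A (1 / 2) * B⁻¹ *
              (mpow A (1 / 2) * mpow A (-(1 / 2))) from by simp only [Matrix.mul_assoc],
            hS'S, hSS', Matrix.one_mul, Matrix.mul_one]
      _ = _ := by rw [hCinner, hCinv]
  have hHpos : ∀ i, 0 < (1 - ν) * 1 + ν * (hCh.eigenvalues i)⁻¹ := by
    intro i
    have h1 : 0 < ν * (hCh.eigenvalues i)⁻¹ := mul_pos hν0 (inv_pos.mpr (hu i))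
    nlinarith
  have hH : (1 - ν) • A⁻¹ + ν • B⁻¹ = mpow A (-(1 / 2)) *
      fc hCh (fun i => (1 - ν) * 1 + ν * (hCh.eigenvalues i)⁻¹) * mpow A (-(1 / 2)) := by
    rw [hAinv, hBinv, fc_add hCh (fun _ => (1 - ν) * 1) (fun i => ν * (hCh.eigenvalues i)⁻¹),
      fc_smul hCh (1 - ν) (fun _ => 1), fc_smul hCh ν (fun i => (hCh.eigenvalues i)⁻¹)]
    simp only [mul_add, add_mul, mul_smul_comm, smul_mul_assoc]
  have hHarm : harm A B ν = mpow A (1 / 2) *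
      fc hCh (fun i => ((1 - ν) * 1 + ν * (hCh.eigenvalues i)⁻¹)⁻¹) * mpow A (1 / 2) := by
    show ((1 - ν) • A⁻¹ + ν • B⁻¹)⁻¹ = _
    rw [hH]
    exact conj_inv' hCh hS'S hSS' _ (fun i => (hHpos i).ne')
  have hsharpAB : sharp A B ν = mpow A (1 / 2) *
      fc hCh (fun i => hCh.eigenvalues i ^ ν) * mpow A (1 / 2) := by
    show mpow A (1 / 2) * mpow (mpow A (-(1 / 2)) * B * mpow A (-(1 / 2))) ν *
      mpow A (1 / 2) = _
    rw [mpow_eq_fc hCh]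
  constructor
  · rw [hWinv, hHarm, conj_sub' hCh (mpow A (1 / 2)) _ _]
    refine conj_psd hCh hS ?_
    intro i
    have hx : 0 < (hCh.eigenvalues i)⁻¹ := inv_pos.mpr (hu i)
    have h1 : ((hCh.eigenvalues i)⁻¹) ^ ν +
        ∑ k ∈ Finset.range (n₀ + 1), r ν k * brk ν ((hCh.eigenvalues i)⁻¹) k
        ≤ (1 - ν) * 1 + ν * (hCh.eigenvalues i)⁻¹ := by
      have := hF_ub _ hx
      linarith
    have h2 := inv_anti₀ (hGpos i) h1
    linarith
  · rw [hsharpAB, hWinv, conj_sub' hCh (mpow A (1 / 2)) _ _]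
    refine conj_psd hCh hS ?_
    intro i
    have hx : 0 < (hCh.eigenvalues i)⁻¹ := inv_pos.mpr (hu i)
    have h2 : (((hCh.eigenvalues i)⁻¹) ^ ν +
        ∑ k ∈ Finset.range (n₀ + 1), r ν k * brk ν ((hCh.eigenvalues i)⁻¹) k)⁻¹
        ≤ (((hCh.eigenvalues i)⁻¹) ^ ν)⁻¹ :=
      inv_anti₀ (Real.rpow_pos_of_pos hx ν) (hF_lb _ hx)
    have h3 : (((hCh.eigenvalues i)⁻¹) ^ ν)⁻¹ = hCh.eigenvalues i ^ ν := by
      rw [Real.inv_rpow (hu i).le, inv_inv]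
    linarith
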